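/- In the roundabout exploration model, let t ∈ [N], let s = |A(t)|, and let 1 ≤ i_1 < i_2 < ⋯ < i_s ≤ N be the initial states (indices) of the agents in A(t). Then for every ℓ ∈ [s−1], the half-open circular interval ⟨i_ℓ, i_{ℓ+1}) is contained in D_{i_ℓ}(t), and ⟨i_s, i_1) is contained in D_{i_s}(t). -/

import Mathlib

/-- The circular interval `⟨i, j⟩` on `Fin N`: all states encountered when moving
forward from `i` to `j` along the cycle `(0, 1, …, N-1, 0)`. -/
def cInt {N : ℕ} (i j : Fin N) : Set (Fin N) := {x | (x - i).val ≤ (j - i).val}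

/-- The half-open circular interval `⟨i, j)` on `Fin N`, which excludes the right
endpoint `j`. -/
def cIntHalf {N : ℕ} (i j : Fin N) : Set (Fin N) := cInt i j \ {j}

/-- The roundabout exploration model on the state set `Fin N`:
`avail t` is the set of positions available at step `t` (steps `t = 1, …, N` are
relevant), `state i t` is the state of agent `a_i` after step `t`, and `active t`
is the set of (indices of) active agents after step `t`. Agent `a_i` starts at
state `i`, moves forward one position (cyclically) at step `t` whenever its
current position is available, and stays put otherwise. Active agents satisfy:
initially all agents are active, the active sets are decreasing, elimination
preserves coverage of visited states, and every active agent is non-redundant. -/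
structure Roundabout (N : ℕ) [NeZero N] where
  avail : ℕ → Set (Fin N)
  state : Fin N → ℕ → Fin N
  active : ℕ → Set (Fin N)
  state_zero : ∀ i, state i 0 = i
  state_succ_of_mem : ∀ i t, state i t ∈ avail (t + 1) → state i (t + 1) = state i t + 1
  state_succ_of_not_mem : ∀ i t, state i t ∉ avail (t + 1) → state i (t + 1) = state i t
  active_zero : active 0 = Set.univ
  active_mono : ∀ t, active (t + 1) ⊆ active t
  active_cover : ∀ t, (⋃ j ∈ active (t + 1), cInt j (state j (t + 1)))
      = ⋃ j ∈ active t, cInt j (state j (t + 1))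
  active_nonredundant : ∀ t, ∀ i ∈ active (t + 1),
      ¬ cInt i (state i (t + 1)) ⊆ ⋃ j ∈ active (t + 1) \ {i}, cInt j (state j (t + 1))

/-- `D_i(t)`, the set of states visited by agent `a_i` up to step `t`. -/
def Roundabout.visited {N : ℕ} [NeZero N] (R : Roundabout N) (i : Fin N) (t : ℕ) :
    Set (Fin N) := cInt i (R.state i t)

/-- The roundabout model is `k`-deficient: at every step `t ∈ [N]`, at most `2k`
positions are unavailable. -/
def Roundabout.KDeficient {N : ℕ} [NeZero N] (R : Roundabout N) (k : ℕ) : Prop :=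
  ∀ t : ℕ, 1 ≤ t → t ≤ N → ((R.avail t)ᶜ : Set (Fin N)).ncard ≤ 2 * k

namespace RoundaboutAux

lemma subval {N : ℕ} [NeZero N] (x i : Fin N) :
    (i.val ≤ x.val ∧ (x - i).val = x.val - i.val) ∨
    (x.val < i.val ∧ (x - i).val = x.val + N - i.val) := by
  have hx := x.isLt; have hi := i.isLt
  have h : (x - i).val = (N - i.val + x.val) % N := by rw [Fin.sub_def]
  rcases le_or_gt i.val x.val with hle | hlt
  · left; refine ⟨hle, ?_⟩
    have h2 : N - i.val + x.val = N + (x.val - i.val) := by omega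
    rw [h, h2, Nat.add_mod_left, Nat.mod_eq_of_lt (by omega)]
  · right; refine ⟨hlt, ?_⟩
    rw [h, Nat.mod_eq_of_lt (by omega)]; omega

lemma sub_val_inj {N : ℕ} [NeZero N] {x y j : Fin N} (h : (x - j).val = (y - j).val) :
    x = y := by
  have hx := x.isLt; have hy := y.isLt; have hj := j.isLt
  rcases subval x j with ⟨h1, h2⟩ | ⟨h1, h2⟩ <;> rcases subval y j with ⟨h3, h4⟩ | ⟨h3, h4⟩ <;>
    exact Fin.val_injective (by omega)

end RoundaboutAux

namespace Roundabout

open RoundaboutAux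

variable {N : ℕ} [NeZero N]

open Fin.NatCast

open Classical in
noncomputable def pos (R : Roundabout N) (i : Fin N) : ℕ → ℕ
  | 0 => i.val
  | t + 1 => R.pos i t + (if R.state i t ∈ R.avail (t + 1) then 1 else 0)

lemma state_eq (R : Roundabout N) (i : Fin N) : ∀ t, R.state i t = ((R.pos i t : ℕ) : Fin N)
  | 0 => by simp [Roundabout.pos, R.state_zero, Fin.cast_val_eq_self]
  | (t + 1) => by
    by_cases h : R.state i t ∈ R.avail (t + 1)
    · rw [R.state_succ_of_mem i t h, R.state_eq i t]
      simp [Roundabout.pos, h]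
    · rw [R.state_succ_of_not_mem i t h, R.state_eq i t]
      simp [Roundabout.pos, h]

lemma le_pos (R : Roundabout N) (i : Fin N) : ∀ t, i.val ≤ R.pos i t
  | 0 => le_refl _
  | (t + 1) => by
    have := R.le_pos i t
    simp only [Roundabout.pos]
    split <;> omega

lemma pos_le (R : Roundabout N) (i : Fin N) : ∀ t, R.pos i t ≤ i.val + t
  | 0 => le_refl _
  | (t + 1) => by
    have := R.pos_le i t
    simp only [Roundabout.pos]
    split <;> omega

lemma le_pos_succ (R : Roundabout N) (i : Fin N) (t : ℕ) : R.pos i t ≤ R.pos i (t + 1) := by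
  simp only [Roundabout.pos]; split <;> omega

lemma pos_succ_le (R : Roundabout N) (i : Fin N) (t : ℕ) : R.pos i (t + 1) ≤ R.pos i t + 1 := by
  simp only [Roundabout.pos]; split <;> omega

lemma pos_mono (R : Roundabout N) (i j : Fin N) (c : ℕ) (h0 : i.val ≤ j.val + c * N) :
    ∀ t, R.pos i t ≤ R.pos j t + c * N
  | 0 => h0
  | (t + 1) => by
    rcases lt_or_eq_of_le (R.pos_mono i j c h0 t) with hlt | heq
    · have h1 := R.pos_succ_le i t
      have h2 := R.le_pos_succ j t
      omega
    · have hst : R.state i t = R.state j t := by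
        rw [R.state_eq, R.state_eq, heq]
        push_cast
        simp [Fin.natCast_self]
      simp only [Roundabout.pos]
      rw [hst, heq]
      omega

lemma mem_visited_iff (R : Roundabout N) (i x : Fin N) (t : ℕ) :
    x ∈ R.visited i t ↔ (x - i).val ≤ (R.pos i t - i.val) % N := by
  have h1 : i.val ≤ R.pos i t := R.le_pos i t
  have h2 : R.state i t - i = ((R.pos i t - i.val : ℕ) : Fin N) := by
    rw [R.state_eq]
    have h3 : ((R.pos i t : ℕ) : Fin N) = i + ((R.pos i t - i.val : ℕ) : Fin N) := by
      conv_lhs => rw [show R.pos i t = i.val + (R.pos i t - i.val) from by omega]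
      push_cast [Fin.cast_val_eq_self]
      ring
    rw [h3, add_sub_cancel_left]
  simp only [Roundabout.visited, cInt, Set.mem_setOf_eq]
  rw [h2, Fin.val_natCast]

lemma self_mem_visited (R : Roundabout N) (i : Fin N) (t : ℕ) : i ∈ R.visited i t := by
  rw [R.mem_visited_iff]
  rcases subval i i with ⟨_, h⟩ | ⟨h, _⟩
  · rw [h, Nat.sub_self]; exact Nat.zero_le _
  · exact absurd h (lt_irrefl _)

end Roundabout

namespace Roundabout

open RoundaboutAux

variable {N : ℕ} [NeZero N]

open Fin.NatCast

lemma key (R : Roundabout N) (hN : 2 ≤ N) :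
    ∀ u, u ≤ N → ∀ j, j ∈ R.active u → (∃ k ∈ R.active u, k ≠ j) →
    ∀ x : Fin N, (∀ k ∈ R.active u, k ≠ j → (x - j).val < (k - j).val) →
    x ∈ R.visited j u := by
  intro u
  induction u with
  | zero =>
    intro _ j hj _ x H
    have hk : (j + 1 : Fin N) ∈ R.active 0 := by rw [R.active_zero]; trivial
    have h1 : ((j + 1 : Fin N) - j).val = 1 := by
      rw [add_sub_cancel_left, ← Nat.cast_one, Fin.val_natCast]
      exact Nat.mod_eq_of_lt hN
    have hne : (j + 1 : Fin N) ≠ j := by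
      intro hEq
      have h2 : ((j + 1 : Fin N) - j).val = (j - j).val := by rw [hEq]
      rcases subval j j with ⟨_, h3⟩ | ⟨h3, _⟩
      · omega
      · exact absurd h3 (lt_irrefl _)
    have h4 := H (j + 1) hk hne
    rw [h1] at h4
    have h5 : x = j := by
      apply sub_val_inj (j := j)
      rcases subval j j with ⟨_, h3⟩ | ⟨h3, _⟩
      · omega
      · exact absurd h3 (lt_irrefl _)
    rw [h5]
    exact R.self_mem_visited j 0
  | succ u ih =>
    intro hu j hj hex x H
    obtain ⟨k0, hk0, hk0j⟩ := hex
    have hjU : j ∈ R.active u := R.active_mono u hj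
    have hk0U : k0 ∈ R.active u := R.active_mono u hk0
    by_cases hxj : x = j
    · rw [hxj]; exact R.self_mem_visited j (u + 1)
    -- (∗): every agent active at time u has moved at most N - 2 steps
    have hstar : ∀ k ∈ R.active u, R.pos k u - k.val ≤ N - 2 := by
      intro k hk
      by_contra hcon
      have h1 := R.le_pos k u
      have h2 := R.pos_le k u
      have hm : R.pos k u - k.val = N - 1 := by omega
      have huniv : ∀ y : Fin N, y ∈ R.visited k u := by
        intro y
        rw [R.mem_visited_iff, hm, Nat.mod_eq_of_lt (by omega)]
        have := (y - k).isLt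
        omega
      have hu1 : 1 ≤ u := by
        by_contra h0
        have h3 : u = 0 := by omega
        rw [h3] at hm
        simp only [Roundabout.pos] at hm
        omega
      obtain ⟨k', hk', hk'k⟩ : ∃ k' ∈ R.active u, k' ≠ k := by
        by_cases hkj : k = j
        · exact ⟨k0, hk0U, by rw [hkj]; exact hk0j⟩
        · exact ⟨j, hjU, fun hEq => hkj hEq.symm⟩
      have hnr := R.active_nonredundant (u - 1)
      have heq : u - 1 + 1 = u := by omega
      rw [heq] at hnr
      refine hnr k' hk' ?_
      intro y _
      exact Set.mem_biUnion ⟨hk, by simpa using hk'k.symm⟩ (huniv y)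
    -- visited sets of agents active at u are monotone from u to u+1
    have hmonoD : ∀ k ∈ R.active u, ∀ y, y ∈ R.visited k u → y ∈ R.visited k (u + 1) := by
      intro k hk y hy
      have hs := hstar k hk
      have h1 := R.le_pos k u
      have h3 := R.pos_succ_le k u
      have h4 := R.le_pos_succ k u
      rw [R.mem_visited_iff] at hy ⊢
      rw [Nat.mod_eq_of_lt (by omega)] at hy
      rw [Nat.mod_eq_of_lt (by omega)]
      omega
    -- the active agent at u closest behind x
    obtain ⟨k1, hk1, hk1min⟩ :=
      Set.exists_min_image (R.active u) (fun k => (x - k).val) (Set.toFinite _) ⟨j, hjU⟩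
    have hx1 : x ∈ R.visited k1 u := by
      refine ih (by omega) k1 hk1 ?_ x ?_
      · by_cases hjk1 : j = k1
        · exact ⟨k0, hk0U, by rw [← hjk1]; exact hk0j⟩
        · exact ⟨j, hjU, hjk1⟩
      · intro k hk hkne
        by_contra hge
        push_neg at hge
        have hmin := hk1min k hk
        have hkk1 : k.val ≠ k1.val := fun hEq => hkne (Fin.val_injective hEq)
        have b1 := x.isLt; have b2 := k.isLt; have b3 := k1.isLt
        rcases subval x k1 with ⟨c1, c2⟩ | ⟨c1, c2⟩ <;>
          rcases subval k k1 with ⟨d1, d2⟩ | ⟨d1, d2⟩ <;>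
          rcases subval x k with ⟨f1, f2⟩ | ⟨f1, f2⟩ <;> omega
    have hx2 : x ∈ ⋃ k ∈ R.active (u + 1), cInt k (R.state k (u + 1)) := by
      rw [R.active_cover u]
      exact Set.mem_biUnion hk1 (hmonoD k1 hk1 x hx1)
    simp only [Set.mem_iUnion, exists_prop] at hx2
    obtain ⟨k2, hk2, hxk2⟩ := hx2
    by_cases hk2j : k2 = j
    · rw [hk2j] at hxk2; exact hxk2
    · have ha := H k2 hk2 hk2j
      have hk2U := R.active_mono u hk2
      have hs2 := hstar k2 hk2U
      have hsj := hstar j hjU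
      have l1 := R.le_pos k2 u
      have l2 := R.le_pos j u
      have l3 := R.pos_succ_le k2 u
      have l4 := R.le_pos_succ k2 u
      have l5 := R.pos_succ_le j u
      have l6 := R.le_pos_succ j u
      have hxk2' : (x - k2).val ≤ R.pos k2 (u + 1) - k2.val := by
        replace hxk2 : x ∈ R.visited k2 (u + 1) := hxk2
        rw [R.mem_visited_iff] at hxk2
        rwa [Nat.mod_eq_of_lt (by omega)] at hxk2
      rw [R.mem_visited_iff, Nat.mod_eq_of_lt (by omega : R.pos j (u + 1) - j.val < N)]
      have hxvj : x.val ≠ j.val := fun hEq => hxj (Fin.val_injective hEq)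
      have b1 := x.isLt; have b2 := j.isLt; have b3 := k2.isLt
      rcases subval j k2 with ⟨c1, c2⟩ | ⟨c1, c2⟩
      · have hmv := R.pos_mono k2 j 0 (by omega) (u + 1)
        rcases subval x j with ⟨d1, d2⟩ | ⟨d1, d2⟩ <;>
          rcases subval x k2 with ⟨f1, f2⟩ | ⟨f1, f2⟩ <;>
          rcases subval k2 j with ⟨g1, g2⟩ | ⟨g1, g2⟩ <;> omega
      · have hmv := R.pos_mono k2 j 1 (by omega) (u + 1)
        rcases subval x j with ⟨d1, d2⟩ | ⟨d1, d2⟩ <;>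
          rcases subval x k2 with ⟨f1, f2⟩ | ⟨f1, f2⟩ <;>
          rcases subval k2 j with ⟨g1, g2⟩ | ⟨g1, g2⟩ <;> omega

end Roundabout

open RoundaboutAux

set_option maxHeartbeats 2000000

/-- **Lemma (interval cover).** Let `t ∈ [N]`, `s = |A(t)|`, and let
`e 0 < e 1 < ⋯ < e (s-1)` enumerate the initial states (indices) of the agents in
`A(t)`. Then each agent `a_{e ℓ}` has visited, by step `t`, the half-open circular
interval from its own initial state to the initial state of the next active agent
(cyclically). -/
theorem roundabout_interval_cover {N : ℕ} [NeZero N] (R : Roundabout N)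
    (t : ℕ) (ht1 : 1 ≤ t) (ht : t ≤ N)
    (s : ℕ) (hs : s = (R.active t).ncard)
    (e : Fin s → Fin N) (hmono : StrictMono e) (hrange : Set.range e = R.active t) :
    (∀ ℓ : Fin s, ∀ h : ℓ.val + 1 < s,
      cIntHalf (e ℓ) (e ⟨ℓ.val + 1, h⟩) ⊆ R.visited (e ℓ) t) ∧
    (∀ h : 0 < s,
      cIntHalf (e ⟨s - 1, by omega⟩) (e ⟨0, h⟩) ⊆ R.visited (e ⟨s - 1, by omega⟩) t) := by
  constructor
  · intro ℓ h x hx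
    obtain ⟨hx1, hx2⟩ : (x - e ℓ).val ≤ (e ⟨ℓ.val + 1, h⟩ - e ℓ).val ∧ x ≠ e ⟨ℓ.val + 1, h⟩ := by
      simpa [cIntHalf, cInt, Set.mem_diff] using hx
    rcases Nat.lt_or_ge N 2 with hN | hN
    · have h1 := x.isLt
      have h2 := (e ⟨ℓ.val + 1, h⟩).isLt
      exact absurd (Fin.val_injective (show x.val = (e ⟨ℓ.val + 1, h⟩).val by omega)) hx2
    · refine R.key hN t ht (e ℓ) ?_ ?_ x ?_
      · exact hrange ▸ Set.mem_range_self ℓ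
      · refine ⟨e ⟨ℓ.val + 1, h⟩, hrange ▸ Set.mem_range_self _, fun hEq => ?_⟩
        have := hmono.injective hEq
        simp [Fin.ext_iff] at this
      · intro k hk hkj
        rw [← hrange] at hk
        obtain ⟨m, rfl⟩ := hk
        by_cases hm : m = ⟨ℓ.val + 1, h⟩
        · rw [hm]
          exact lt_of_le_of_ne hx1 (fun hEq => hx2 (sub_val_inj hEq))
        · refine lt_of_le_of_lt hx1 ?_
          have hmℓ : m.val ≠ ℓ.val := fun hEq => hkj (congrArg e (Fin.val_injective hEq))
          have hm1 : m.val ≠ ℓ.val + 1 := fun hEq => hm (Fin.val_injective hEq)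
          have hv1 : (e ℓ).val < (e ⟨ℓ.val + 1, h⟩).val :=
            hmono (show ℓ < ⟨ℓ.val + 1, h⟩ from Fin.lt_def.mpr (by simp))
          have bx := (e ⟨ℓ.val + 1, h⟩).isLt
          have bm := (e m).isLt
          rcases Nat.lt_or_ge m.val ℓ.val with hcase | hcase
          · have hv2 : (e m).val < (e ℓ).val := hmono (Fin.lt_def.mpr hcase)
            rcases subval (e ⟨ℓ.val + 1, h⟩) (e ℓ) with ⟨c1, c2⟩ | ⟨c1, c2⟩ <;>
              rcases subval (e m) (e ℓ) with ⟨d1, d2⟩ | ⟨d1, d2⟩ <;> omega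
          · have hcase2 : ℓ.val + 1 < m.val := by omega
            have hv2 : (e ⟨ℓ.val + 1, h⟩).val < (e m).val :=
              hmono (Fin.lt_def.mpr (by simpa using hcase2))
            rcases subval (e ⟨ℓ.val + 1, h⟩) (e ℓ) with ⟨c1, c2⟩ | ⟨c1, c2⟩ <;>
              rcases subval (e m) (e ℓ) with ⟨d1, d2⟩ | ⟨d1, d2⟩ <;> omega
  · intro h x hx
    obtain ⟨hx1, hx2⟩ : (x - e ⟨s - 1, by omega⟩).val ≤ (e ⟨0, h⟩ - e ⟨s - 1, by omega⟩).val ∧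
        x ≠ e ⟨0, h⟩ := by
      simpa [cIntHalf, cInt, Set.mem_diff] using hx
    by_cases hs1 : s = 1
    · exfalso
      apply hx2
      have hEq : (⟨s - 1, by omega⟩ : Fin s) = ⟨0, h⟩ := Fin.val_injective (by simp; omega)
      rw [hEq] at hx1
      have h0 : (e ⟨0, h⟩ - e ⟨0, h⟩).val = 0 := by
        rcases subval (e ⟨0, h⟩) (e ⟨0, h⟩) with ⟨_, h3⟩ | ⟨h3, _⟩
        · omega
        · exact absurd h3 (lt_irrefl _)
      exact sub_val_inj (show (x - e ⟨0, h⟩).val = (e ⟨0, h⟩ - e ⟨0, h⟩).val by omega)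
    · have hs2 : 2 ≤ s := by omega
      rcases Nat.lt_or_ge N 2 with hN | hN
      · have h1 := x.isLt
        have h2 := (e ⟨0, h⟩).isLt
        exact absurd (Fin.val_injective (show x.val = (e ⟨0, h⟩).val by omega)) hx2
      · refine R.key hN t ht (e ⟨s - 1, by omega⟩) ?_ ?_ x ?_
        · have hmem := Set.mem_range_self (f := e) ⟨s - 1, by omega⟩
          rwa [hrange] at hmem
        · refine ⟨e ⟨0, h⟩, hrange ▸ Set.mem_range_self _, fun hEq => ?_⟩
          have := hmono.injective hEq
          simp [Fin.ext_iff] at this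
          omega
        · intro k hk hkj
          rw [← hrange] at hk
          obtain ⟨m, rfl⟩ := hk
          by_cases hm : m = ⟨0, h⟩
          · rw [hm]
            exact lt_of_le_of_ne hx1 (fun hEq => hx2 (sub_val_inj hEq))
          · refine lt_of_le_of_lt hx1 ?_
            have hmlast : m.val ≠ s - 1 := fun hEq =>
              hkj (congrArg e (Fin.val_injective (by simpa using hEq)))
            have hm0 : m.val ≠ 0 := fun hEq => hm (Fin.val_injective (by simpa using hEq))
            have hmlt := m.isLt
            have hv1 : (e ⟨0, h⟩).val < (e ⟨s - 1, by omega⟩).val :=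
              hmono (Fin.lt_def.mpr (by simp; omega))
            have hv2 : (e ⟨0, h⟩).val < (e m).val :=
              hmono (Fin.lt_def.mpr (by simp; omega))
            have hv3 : (e m).val < (e ⟨s - 1, by omega⟩).val :=
              hmono (Fin.lt_def.mpr (by simp; omega))
            have b0 := (e ⟨0, h⟩).isLt
            have bm := (e m).isLt
            rcases subval (e ⟨0, h⟩) (e ⟨s - 1, by omega⟩) with ⟨c1, c2⟩ | ⟨c1, c2⟩ <;>
              rcases subval (e m) (e ⟨s - 1, by omega⟩) with ⟨d1, d2⟩ | ⟨d1, d2⟩ <;> omega
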